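/- Let H be a Hopf algebra over a commutative ring k and (δ, σ) a modular pair in involution, i.e. δ : H → k is a character, σ ∈ H is grouplike with δ(σ) = 1, and the twisted antipode S̃(h) = δ(h₍₁₎) S(h₍₂₎) satisfies S̃(S̃(h)) = σ · h · S(σ) for all h ∈ H. Then the operator τ₁(h) = S̃(h)·σ satisfies the cocyclicity condition τ₁² = id, i.e. τ₁(τ₁(h)) = h for all h ∈ H. -/

import Mathlib

open TensorProduct Coalgebra HopfAlgebra

variable {k H : Type*} [CommRing k] [Ring H] [HopfAlgebra k H]

/-- The `δ`-twisted antipode `S̃(h) = δ(h₍₁₎) • S(h₍₂₎)`. -/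
noncomputable def twistedAntipode (δ : H →ₐ[k] k) : H →ₗ[k] H :=
  (TensorProduct.lid k H).toLinearMap ∘ₗ
    TensorProduct.map δ.toLinearMap (antipode (R := k)) ∘ₗ Coalgebra.comul




/-- Convolution product on `H →ₗ[k] H`. -/
noncomputable def conv (f g : H →ₗ[k] H) : H →ₗ[k] H :=
  LinearMap.mul' k H ∘ₗ TensorProduct.map f g ∘ₗ Coalgebra.comul

lemma conv_apply (f g : H →ₗ[k] H) {a : H} {ι : Type*} (repr : Coalgebra.Repr k a ι) :
    conv f g a = ∑ i ∈ repr.index, f (repr.left i) * g (repr.right i) := by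
  simp [conv, ← repr.eq, map_sum]

noncomputable def convUnit : H →ₗ[k] H :=
  Algebra.linearMap k H ∘ₗ Coalgebra.counit

lemma conv_unit_right (f : H →ₗ[k] H) : conv f convUnit = f := by
  ext a
  rw [conv_apply f convUnit (ℛ k a)]
  have := Coalgebra.sum_map_tmul_counit_eq (R := k) f a (repr := ℛ k a)
  apply_fun (TensorProduct.rid k H) at this
  simp only [map_sum, TensorProduct.rid_tmul, one_smul] at this
  simp only [convUnit, LinearMap.coe_comp, Function.comp_apply, Algebra.linearMap_apply]
  rw [← this]
  congr 1; ext i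
  rw [Algebra.smul_def, Algebra.commutes]

lemma conv_unit_left (f : H →ₗ[k] H) : conv convUnit f = f := by
  ext a
  rw [conv_apply convUnit f (ℛ k a)]
  have := Coalgebra.sum_counit_tmul_map_eq (R := k) f a (repr := ℛ k a)
  apply_fun (TensorProduct.lid k H) at this
  simp only [map_sum, TensorProduct.lid_tmul, one_smul] at this
  simp only [convUnit, LinearMap.coe_comp, Function.comp_apply, Algebra.linearMap_apply]
  rw [← this]
  congr 1; ext i
  rw [Algebra.smul_def]

lemma conv_assoc (f g h : H →ₗ[k] H) : conv (conv f g) h = conv f (conv g h) := by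
  ext a
  set r := ℛ k a
  set r1 : (i : H × H) → Coalgebra.Repr k (r.left i) (H × H) := fun i => ℛ k (r.left i)
  set r2 : (i : H × H) → Coalgebra.Repr k (r.right i) (H × H) := fun i => ℛ k (r.right i)
  have key := Coalgebra.sum_map_tmul_tmul_eq (R := k) f g h a (repr := r) (a₁ := r1) (a₂ := r2)
  apply_fun (LinearMap.mul' k H ∘ₗ LinearMap.lTensor H (LinearMap.mul' k H)) at key
  simp only [map_sum, LinearMap.coe_comp, Function.comp_apply, LinearMap.lTensor_tmul,
    LinearMap.mul'_apply] at key
  rw [conv_apply (conv f g) h r, conv_apply f (conv g h) r]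
  calc ∑ i ∈ r.index, conv f g (r.left i) * h (r.right i)
      = ∑ i ∈ r.index, ∑ j ∈ (r1 i).index,
          f ((r1 i).left j) * (g ((r1 i).right j) * h (r.right i)) := by
        refine Finset.sum_congr rfl fun i _ => ?_
        rw [conv_apply f g (r1 i), Finset.sum_mul]
        exact Finset.sum_congr rfl fun j _ => mul_assoc _ _ _
    _ = ∑ i ∈ r.index, ∑ j ∈ (r2 i).index,
          f (r.left i) * (g ((r2 i).left j) * h ((r2 i).right j)) := key.symm
    _ = ∑ i ∈ r.index, f (r.left i) * conv g h (r.right i) := by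
        refine Finset.sum_congr rfl fun i _ => ?_
        rw [conv_apply g h (r2 i), Finset.mul_sum]

lemma conv_uniq {f g g' : H →ₗ[k] H} (h1 : conv g f = convUnit)
    (h2 : conv f g' = convUnit) : g = g' := by
  calc g = conv g convUnit := (conv_unit_right g).symm
    _ = conv g (conv f g') := by rw [h2]
    _ = conv (conv g f) g' := (conv_assoc _ _ _).symm
    _ = conv convUnit g' := by rw [h1]
    _ = g' := conv_unit_left g'



/-- A representation of `a * σ` from one of `a`, using that `σ` is grouplike. -/
noncomputable def Repr.mulGrouplike {σ : H} (hΔ : Coalgebra.comul (R := k) σ = σ ⊗ₜ[k] σ)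
    {a : H} {ι : Type*} (r : Coalgebra.Repr k a ι) : Coalgebra.Repr k (a * σ) ι where
  index := r.index
  left i := r.left i * σ
  right i := r.right i * σ
  eq := by
    rw [Bialgebra.comul_mul, hΔ, ← r.eq, Finset.sum_mul]
    exact Finset.sum_congr rfl fun i _ => (Algebra.TensorProduct.tmul_mul_tmul _ _ _ _).symm

/-- The trivial representation of a grouplike element. -/
noncomputable def Repr.grouplike {σ : H} (hΔ : Coalgebra.comul (R := k) σ = σ ⊗ₜ[k] σ) :
    Coalgebra.Repr k σ ℕ where
  index := ({0} : Finset ℕ)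
  left _ := σ
  right _ := σ
  eq := by simp [hΔ]

lemma antipode_mul_grouplike {σ : H} (hΔ : Coalgebra.comul (R := k) σ = σ ⊗ₜ[k] σ)
    (hε : Coalgebra.counit (R := k) σ = (1 : k)) (a : H) :
    antipode (R := k) (a * σ) = antipode (R := k) σ * antipode (R := k) a := by
  have hσ : antipode (R := k) σ * σ = 1 := by
    have := mul_antipode_rTensor_comul_apply (R := k) σ
    rwa [hΔ, hε, map_one, LinearMap.rTensor_tmul, LinearMap.mul'_apply] at this
  have h1 : conv (LinearMap.mulLeft k (antipode (R := k) σ) ∘ₗ antipode (R := k))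
      (LinearMap.mulRight k σ) = convUnit := by
    ext b
    rw [conv_apply _ _ (ℛ k b)]
    simp only [LinearMap.coe_comp, Function.comp_apply, LinearMap.mulLeft_apply,
      LinearMap.mulRight_apply, convUnit, Algebra.linearMap_apply]
    calc ∑ i ∈ (ℛ k b).index,
          antipode (R := k) σ * antipode (R := k) ((ℛ k b).left i) * ((ℛ k b).right i * σ)
        = antipode (R := k) σ *
            (∑ i ∈ (ℛ k b).index, antipode (R := k) ((ℛ k b).left i) * (ℛ k b).right i) * σ := by
          rw [Finset.mul_sum, Finset.sum_mul]
          exact Finset.sum_congr rfl fun i _ => by simp only [mul_assoc]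
      _ = algebraMap k H (Coalgebra.counit b) := by
          rw [sum_antipode_mul_eq_algebraMap_counit (ℛ k b), ← Algebra.commutes, mul_assoc, hσ, mul_one]
  have h2 : conv (LinearMap.mulRight k σ)
      (antipode (R := k) ∘ₗ LinearMap.mulRight k σ) = convUnit := by
    ext b
    rw [conv_apply _ _ (ℛ k b)]
    simp only [LinearMap.coe_comp, Function.comp_apply, LinearMap.mulRight_apply, convUnit,
      Algebra.linearMap_apply]
    have := sum_mul_antipode_eq_algebraMap_counit (R := k) (Repr.mulGrouplike hΔ (ℛ k b))
    simp only [Repr.mulGrouplike] at this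
    rw [this, Bialgebra.counit_mul, hε, mul_one]
  have := LinearMap.congr_fun (conv_uniq h1 h2) a
  simpa using this.symm
lemma antipode_mul_grouplike_self {σ : H} (hΔ : Coalgebra.comul (R := k) σ = σ ⊗ₜ[k] σ)
    (hε : Coalgebra.counit (R := k) σ = (1 : k)) : antipode (R := k) σ * σ = 1 := by
  have := mul_antipode_rTensor_comul_apply (R := k) σ
  rwa [hΔ, hε, map_one, LinearMap.rTensor_tmul, LinearMap.mul'_apply] at this

lemma twistedAntipode_apply_repr (δ : H →ₐ[k] k) {a : H} {ι : Type*} (r : Coalgebra.Repr k a ι) :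
    twistedAntipode δ a = ∑ i ∈ r.index, δ (r.left i) • antipode (R := k) (r.right i) := by
  simp [twistedAntipode, ← r.eq, map_sum]

lemma twistedAntipode_mul_grouplike (δ : H →ₐ[k] k) {σ : H}
    (hΔ : Coalgebra.comul (R := k) σ = σ ⊗ₜ[k] σ)
    (hε : Coalgebra.counit (R := k) σ = (1 : k)) (hδσ : δ σ = 1) (a : H) :
    twistedAntipode δ (a * σ) = antipode (R := k) σ * twistedAntipode δ a := by
  rw [twistedAntipode_apply_repr δ (Repr.mulGrouplike hΔ (ℛ k a)),
    twistedAntipode_apply_repr δ (ℛ k a), Finset.mul_sum]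
  simp only [Repr.mulGrouplike]
  refine Finset.sum_congr rfl fun i _ => ?_
  rw [map_mul, hδσ, mul_one, antipode_mul_grouplike hΔ hε, mul_smul_comm]

/-- a modular pair in involution yields τ₁² = id. -/
theorem tau1_involutive (δ : H →ₐ[k] k) (σ : H)
    (hΔ : Coalgebra.comul (R := k) σ = σ ⊗ₜ[k] σ)
    (hε : Coalgebra.counit (R := k) σ = (1 : k))
    (hδσ : δ σ = 1)
    (hMPI : ∀ h : H, twistedAntipode δ (twistedAntipode δ h) =
      σ * h * antipode (R := k) σ) :
    ∀ h : H, twistedAntipode δ (twistedAntipode δ h * σ) * σ = h := by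
  intro h
  rw [twistedAntipode_mul_grouplike δ hΔ hε hδσ, hMPI]
  have hσ := antipode_mul_grouplike_self hΔ hε
  calc antipode (R := k) σ * (σ * h * antipode (R := k) σ) * σ
      = (antipode (R := k) σ * σ) * (h * (antipode (R := k) σ * σ)) := by
        simp only [mul_assoc]
    _ = h := by rw [hσ, mul_one, one_mul]
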